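/- Let u = δ + αx + βy + γz be a nonzero element of D = ℍ[K,a,b] with ν_K(Nrd(u)) = ν_K(δ² - aα² - bβ² + abγ²) ≥ 0 (i.e. u ∈ O_D). Then δ, α, β, γ ∈ O_K. Hence the ring of integers O_D is contained in the O_K-submodule of D generated by 1, x, y, z. -/

import Mathlib

noncomputable section

/-- A surjective discrete valuation `ν : K → ℤ` on a field `K`
(the value of `ν` at `0` is irrelevant: only nonzero elements are constrained). -/
structure DVal (K : Type) [Field K] : Type where
  ν : K → ℤ
  ν_mul : ∀ x y : K, x ≠ 0 → y ≠ 0 → ν (x * y) = ν x + ν y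
  ν_add : ∀ x y : K, x ≠ 0 → y ≠ 0 → x + y ≠ 0 → min (ν x) (ν y) ≤ ν (x + y)
  ν_one : ν 1 = 0
  ν_surj : ∀ n : ℤ, ∃ x : K, x ≠ 0 ∧ ν x = n

namespace DVal

variable {K : Type} [Field K]

/-- `x` belongs to the valuation ring `O_K`. -/
def Int (V : DVal K) (x : K) : Prop := x = 0 ∨ 0 ≤ V.ν x

/-- `x` is a unit of the valuation ring `O_K`. -/
def IntUnit (V : DVal K) (x : K) : Prop := x ≠ 0 ∧ V.ν x = 0

/-- `x` belongs to the maximal ideal `m_K` of the valuation ring `O_K`. -/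
def MaxIdeal (V : DVal K) (x : K) : Prop := x = 0 ∨ 1 ≤ V.ν x

/-- `K` is complete with respect to the valuation `ν`: every Cauchy sequence converges. -/
def IsComplete (V : DVal K) : Prop :=
  ∀ f : ℕ → K,
    (∀ M : ℤ, ∃ N : ℕ, ∀ m n : ℕ, N ≤ m → N ≤ n →
      f m - f n = 0 ∨ M ≤ V.ν (f m - f n)) →
    ∃ L : K, ∀ M : ℤ, ∃ N : ℕ, ∀ n : ℕ, N ≤ n →
      f n - L = 0 ∨ M ≤ V.ν (f n - L)

/-- The residue field `k = O_K/m_K` has characteristic different from `2`,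
i.e. `2` is a unit of the valuation ring `O_K`. -/
def ResCharNeTwo (V : DVal K) : Prop := (2 : K) ≠ 0 ∧ V.ν 2 = 0

end DVal

/-- The reduced norm of a quaternion `u = δ + αx + βy + γz ∈ ℍ[K,a,b]`:
`Nrd u = u·τ(u) = δ² - aα² - bβ² + abγ²`. -/
def qnrd {K : Type} [Field K] (a b : K) (u : QuaternionAlgebra K a 0 b) : K :=
  u.re ^ 2 - a * u.imI ^ 2 - b * u.imJ ^ 2 + a * b * u.imK ^ 2

/-- The canonical involution `τ(δ + αx + βy + γz) = δ - αx - βy - γz` of `ℍ[K,a,b]`. -/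
def qtau {K : Type} [Field K] {a b : K} (u : QuaternionAlgebra K a 0 b) :
    QuaternionAlgebra K a 0 b :=
  ⟨u.re, -u.imI, -u.imJ, -u.imK⟩

/-- The norm form `⟨1,-a,-b,ab⟩` of `ℍ[K,a,b]` is anisotropic over `K`
(equivalently, `ℍ[K,a,b]` is a division ring). -/
def QAniso {K : Type} [Field K] (a b : K) : Prop :=
  ∀ d e f g : K, d ^ 2 - a * e ^ 2 - b * f ^ 2 + a * b * g ^ 2 = 0 →
    d = 0 ∧ e = 0 ∧ f = 0 ∧ g = 0

/-- The valuation `ν_D(u) = (1/2)·ν_K(Nrd u)` of the quaternion division algebra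
`D = ℍ[K,a,b]` (at nonzero `u`). -/
def qnu {K : Type} [Field K] (V : DVal K) (a b : K) (u : QuaternionAlgebra K a 0 b) : ℚ :=
  (V.ν (qnrd a b u) : ℚ) / 2

-- AUX START
namespace DVal

variable {K : Type} [Field K] (V : DVal K)

/-- `x = 0` or `M ≤ ν x`. -/
def Vge (M : ℤ) (x : K) : Prop := x = 0 ∨ M ≤ V.ν x

variable {V}

lemma vge_mono {M M' : ℤ} {x : K} (h : M' ≤ M) (hx : V.Vge M x) : V.Vge M' x :=
  hx.imp id fun h' => le_trans h h'

lemma ν_neg_one : V.ν (-1 : K) = 0 := by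
  have h := V.ν_mul (-1) (-1) (by norm_num) (by norm_num)
  rw [neg_mul_neg, one_mul, V.ν_one] at h
  omega

lemma ν_neg {x : K} (hx : x ≠ 0) : V.ν (-x) = V.ν x := by
  have h := V.ν_mul (-1) x (by norm_num) hx
  rw [neg_one_mul] at h
  rw [h, ν_neg_one, zero_add]

lemma ν_inv {x : K} (hx : x ≠ 0) : V.ν x⁻¹ = -V.ν x := by
  have h := V.ν_mul x x⁻¹ hx (inv_ne_zero hx)
  rw [mul_inv_cancel₀ hx, V.ν_one] at h
  omega

lemma ν_div {x y : K} (hx : x ≠ 0) (hy : y ≠ 0) : V.ν (x / y) = V.ν x - V.ν y := by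
  rw [div_eq_mul_inv, V.ν_mul x y⁻¹ hx (inv_ne_zero hy), ν_inv hy]
  ring

lemma vge_neg {M : ℤ} {x : K} (hx : V.Vge M x) : V.Vge M (-x) := by
  rcases hx with h | h
  · exact Or.inl (by rw [h, neg_zero])
  · by_cases h0 : x = 0
    · exact Or.inl (by rw [h0, neg_zero])
    · exact Or.inr (by rwa [ν_neg h0])

lemma vge_add {M : ℤ} {x y : K} (hx : V.Vge M x) (hy : V.Vge M y) :
    V.Vge M (x + y) := by
  rcases hx with h | h
  · simpa [h] using hy
  rcases hy with h' | h'
  · rw [h', add_zero]; exact Or.inr h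
  by_cases h0 : x = 0
  · rw [h0, zero_add]; exact Or.inr h'
  by_cases h1 : y = 0
  · rw [h1, add_zero]; exact Or.inr h
  by_cases h2 : x + y = 0
  · exact Or.inl h2
  · exact Or.inr (le_trans (le_min h h') (V.ν_add x y h0 h1 h2))

lemma vge_sub {M : ℤ} {x y : K} (hx : V.Vge M x) (hy : V.Vge M y) :
    V.Vge M (x - y) := by
  rw [sub_eq_add_neg]; exact vge_add hx (vge_neg hy)

lemma vge_mul {M N : ℤ} {x y : K} (hx : V.Vge M x) (hy : V.Vge N y) :
    V.Vge (M + N) (x * y) := by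
  rcases hx with h | h
  · exact Or.inl (by rw [h, zero_mul])
  rcases hy with h' | h'
  · exact Or.inl (by rw [h', mul_zero])
  by_cases h0 : x = 0
  · exact Or.inl (by rw [h0, zero_mul])
  by_cases h1 : y = 0
  · exact Or.inl (by rw [h1, mul_zero])
  exact Or.inr (by rw [V.ν_mul x y h0 h1]; exact add_le_add h h')

/-- Ultrametric strict triangle: adding something strictly larger keeps valuation. -/
lemma ν_add_eq {x y : K} (hx : x ≠ 0) (hy : V.Vge (V.ν x + 1) y) :
    x + y ≠ 0 ∧ V.ν (x + y) = V.ν x := by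
  rcases hy with h | h
  · simp [h, hx]
  by_cases hy0 : y = 0
  · simp [hy0, hx]
  have hne : x + y ≠ 0 := by
    intro hc
    rw [eq_neg_of_add_eq_zero_right hc, ν_neg hx] at h; omega
  refine ⟨hne, ?_⟩
  have h1 := V.ν_add x y hx hy0 hne
  have h2 := V.ν_add (x + y) (-y) hne (neg_ne_zero.mpr hy0) (by simpa using hx)
  rw [add_neg_cancel_right, ν_neg hy0] at h2
  omega

lemma vge_all_eq_zero {x : K} (h : ∀ M : ℤ, V.Vge M x) : x = 0 := by
  by_contra hx
  rcases h (V.ν x + 1) with h0 | h1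
  · exact hx h0
  · omega

end DVal

namespace DVal

variable {K : Type} [Field K] {V : DVal K}

lemma vge_div_unit {M : ℤ} {x y : K} (hx : V.Vge M x) (hy : y ≠ 0)
    (hνy : V.ν y = 0) : V.Vge M (x / y) := by
  by_cases h0 : x = 0
  · exact Or.inl (by rw [h0, zero_div])
  rcases hx with h | h
  · exact absurd h h0
  · exact Or.inr (by rw [ν_div h0 hy, hνy]; omega)

lemma unit_of_not_vge {x : K} (hx : V.Vge 0 x) (hnx : ¬V.Vge 1 x) :
    x ≠ 0 ∧ V.ν x = 0 := by
  unfold Vge at hnx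
  push_neg at hnx
  rcases hx with h | h
  · exact absurd h hnx.1
  · exact ⟨hnx.1, by have := hnx.2; omega⟩

/-- Newton iteration for square roots. -/
def newton (w s : K) : ℕ → K
  | 0 => s
  | n + 1 => (newton w s n + w / newton w s n) / 2

/-- Hensel's lemma for square roots: a unit congruent to the square of a unit
mod the maximal ideal is a square. -/
lemma hensel_sqrt (hcomp : V.IsComplete) (hchar : V.ResCharNeTwo)
    {w s : K} (hs : s ≠ 0) (hνs : V.ν s = 0) (hws : V.Vge 1 (w - s * s)) :
    ∃ r : K, r * r = w := by
  obtain ⟨h2, hν2⟩ := hchar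
  set f : ℕ → K := newton w s with hf
  have key : ∀ n : ℕ, f n ≠ 0 ∧ V.ν (f n) = 0 ∧ V.Vge ((n : ℤ) + 1) (f n * f n - w) := by
    intro n
    induction n with
    | zero =>
      refine ⟨hs, hνs, ?_⟩
      have h0 : f 0 = s := rfl
      simpa [neg_sub, h0] using vge_neg hws
    | succ n ih =>
      obtain ⟨ht0, htν, hte⟩ := ih
      have hft : f (n + 1) = (f n + w / f n) / 2 := rfl
      have h2t : (2 : K) * f n ≠ 0 := mul_ne_zero h2 ht0
      have hν2t : V.ν (2 * f n) = 0 := by rw [V.ν_mul 2 (f n) h2 ht0, hν2, htν]; ring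
      have factA : f (n + 1) - f n = (w - f n * f n) / (2 * f n) := by
        rw [hft]; field_simp; ring
      have factB : f (n + 1) * f (n + 1) - w
          = (f n * f n - w) * (f n * f n - w) / ((2 * f n) * (2 * f n)) := by
        rw [hft]; field_simp; ring
      have hcorr : V.Vge ((n : ℤ) + 1) (f (n + 1) - f n) := by
        rw [factA]
        exact vge_div_unit (by simpa [neg_sub] using vge_neg hte) h2t hν2t
      have heq : f n + (f (n + 1) - f n) = f (n + 1) := by ring
      have hstep := ν_add_eq ht0 (by rw [htν]; exact vge_mono (by omega) hcorr)
      rw [heq] at hstep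
      refine ⟨hstep.1, by rw [hstep.2, htν], ?_⟩
      rw [factB]
      have hnum := vge_mul hte hte
      have hden : V.ν ((2 * f n) * (2 * f n)) = 0 := by
        rw [V.ν_mul _ _ h2t h2t, hν2t]; ring
      exact vge_mono (by push_cast; omega)
        (vge_div_unit hnum (mul_ne_zero h2t h2t) hden)
  have corr : ∀ n : ℕ, V.Vge ((n : ℤ) + 1) (f (n + 1) - f n) := by
    intro n
    obtain ⟨ht0, htν, hte⟩ := key n
    have hft : f (n + 1) = (f n + w / f n) / 2 := rfl
    have h2t : (2 : K) * f n ≠ 0 := mul_ne_zero h2 ht0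
    have hν2t : V.ν (2 * f n) = 0 := by rw [V.ν_mul 2 (f n) h2 ht0, hν2, htν]; ring
    have factA : f (n + 1) - f n = (w - f n * f n) / (2 * f n) := by
      rw [hft]; field_simp; ring
    rw [factA]
    exact vge_div_unit (by simpa [neg_sub] using vge_neg hte) h2t hν2t
  have cau : ∀ n m : ℕ, n ≤ m → V.Vge ((n : ℤ) + 1) (f m - f n) := by
    intro n m h
    induction m, h using Nat.le_induction with
    | base => exact Or.inl (sub_self _)
    | succ m hm ih =>
      have : f (m + 1) - f n = (f (m + 1) - f m) + (f m - f n) := by ring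
      rw [this]
      exact vge_add (vge_mono (by omega) (corr m)) ih
  obtain ⟨L, hL⟩ := hcomp f (by
    intro M
    refine ⟨M.toNat, fun m n hm hn => ?_⟩
    have hM : M ≤ (M.toNat : ℤ) := Int.self_le_toNat M
    rcases le_total n m with h | h
    · exact vge_mono (by omega) (cau n m h)
    · have := vge_neg (cau m n h)
      rw [neg_sub] at this
      exact vge_mono (by omega) this)
  have hL0 : V.Vge 0 L := by
    obtain ⟨N, hN⟩ := hL 0
    have h1 : V.Vge 0 (f N - L) := hN N le_rfl
    have h2 : V.Vge 0 (f N) := Or.inr (le_of_eq (key N).2.1.symm)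
    have : L = f N - (f N - L) := by ring
    rw [this]
    exact vge_sub h2 h1
  refine ⟨L, ?_⟩
  have : L * L - w = 0 := by
    apply vge_all_eq_zero
    intro M
    obtain ⟨N, hN⟩ := hL M
    set n := max N M.toNat with hn
    have hM : M ≤ (M.toNat : ℤ) := Int.self_le_toNat M
    have h1 : V.Vge M (L - f n) := by
      have := vge_neg (hN n (le_max_left _ _))
      rwa [neg_sub] at this
    have h2 : V.Vge 0 (L + f n) :=
      vge_add hL0 (Or.inr (le_of_eq (key n).2.1.symm))
    have h3 : V.Vge M ((L - f n) * (L + f n)) := by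
      have := vge_mul h1 h2
      rwa [add_zero] at this
    have h4 : V.Vge M (f n * f n - w) := by
      refine vge_mono ?_ (key n).2.2
      have : M.toNat ≤ n := le_max_right _ _
      omega
    have heq : L * L - w = (L - f n) * (L + f n) + (f n * f n - w) := by ring
    rw [heq]
    exact vge_add h3 h4
  exact sub_eq_zero.mp this

end DVal


section Cases

open DVal

variable {K : Type} [Field K] {V : DVal K}

/-- If the algebra is division (norm form anisotropic), `a` is not a square. -/
lemma qa_not_sq {a b : K} (haniso : QAniso a b) : ¬∃ r : K, r * r = a := by
  rintro ⟨r, hr⟩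
  have h := haniso r 1 0 0 (by linear_combination hr)
  exact one_ne_zero h.2.1

/-- Hensel trick for a single coordinate: if `c` and `v` are units and
`ν Q ≥ 1`, then `c·v² - Q` is `c` times a square. -/
lemma hensel_coord (hcomp : V.IsComplete) (hchar : V.ResCharNeTwo)
    {c v Q : K} (hc : c ≠ 0) (hνc : V.ν c = 0) (hv : v ≠ 0) (hνv : V.ν v = 0)
    (hQ : V.Vge 1 Q) : ∃ r : K, r ≠ 0 ∧ c * (r * r) = c * (v * v) - Q := by
  have hQc : V.Vge 1 (Q / c) := vge_div_unit hQ hc hνc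
  have hws : V.Vge 1 ((v * v - Q / c) - v * v) := by
    have : (v * v - Q / c) - v * v = -(Q / c) := by ring
    rw [this]; exact vge_neg hQc
  obtain ⟨r, hr⟩ := hensel_sqrt hcomp hchar hv hνv hws
  refine ⟨r, ?_, ?_⟩
  · intro h0
    rw [h0, zero_mul] at hr
    have hQcv : Q / c = v * v := by linear_combination hr
    rcases hQc with h | h
    · have : v * v = 0 := by rw [← hQcv]; exact h
      exact hv (mul_self_eq_zero.mp this)
    · rw [hQcv] at h
      have : V.ν (v * v) = 0 := by rw [V.ν_mul v v hv hv, hνv]; ring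
      omega
  · rw [hr]; field_simp

/-- Case `ν b = 0`: a primitive integral vector cannot make the norm form
small. -/
lemma case0 (hcomp : V.IsComplete) (hchar : V.ResCharNeTwo)
    {a b : K} (ha0 : a ≠ 0) (hνa : V.ν a = 0) (hb0 : b ≠ 0) (hνb : V.ν b = 0)
    (haniso : QAniso a b) {d e f g : K}
    (hd : V.Vge 0 d) (he : V.Vge 0 e) (hf : V.Vge 0 f) (hg : V.Vge 0 g)
    (hQ : V.Vge 1 (d * d - a * (e * e) - b * (f * f) + a * b * (g * g))) :
    V.Vge 1 d ∧ V.Vge 1 e ∧ V.Vge 1 f ∧ V.Vge 1 g := by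
  set Q := d * d - a * (e * e) - b * (f * f) + a * b * (g * g) with hQdef
  refine ⟨?_, ?_, ?_, ?_⟩
  · by_contra hnd
    obtain ⟨h0, h1⟩ := unit_of_not_vge hd hnd
    obtain ⟨r, hr0, hr⟩ := hensel_coord hcomp hchar one_ne_zero V.ν_one h0 h1 hQ
    exact hr0 (haniso r e f g (by linear_combination hr)).1
  · by_contra hne
    obtain ⟨h0, h1⟩ := unit_of_not_vge he hne
    obtain ⟨r, hr0, hr⟩ := hensel_coord hcomp hchar (neg_ne_zero.mpr ha0)
      (by rw [ν_neg ha0, hνa]) h0 h1 hQ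
    exact hr0 (haniso d r f g (by linear_combination hr)).2.1
  · by_contra hnf
    obtain ⟨h0, h1⟩ := unit_of_not_vge hf hnf
    obtain ⟨r, hr0, hr⟩ := hensel_coord hcomp hchar (neg_ne_zero.mpr hb0)
      (by rw [ν_neg hb0, hνb]) h0 h1 hQ
    exact hr0 (haniso d e r g (by linear_combination hr)).2.2.1
  · by_contra hng
    obtain ⟨h0, h1⟩ := unit_of_not_vge hg hng
    obtain ⟨r, hr0, hr⟩ := hensel_coord hcomp hchar (mul_ne_zero ha0 hb0)
      (by rw [V.ν_mul a b ha0 hb0, hνa, hνb]; ring) h0 h1 hQ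
    exact hr0 (haniso d e f r (by linear_combination hr)).2.2.2

/-- Binary subform `⟨1,-a⟩`: if it takes a small value at an integral pair,
that pair lies in the maximal ideal. -/
lemma key_unit (hcomp : V.IsComplete) (hchar : V.ResCharNeTwo)
    {a b : K} (ha0 : a ≠ 0) (hνa : V.ν a = 0) (haniso : QAniso a b)
    {p q : K} (hp : V.Vge 0 p) (hq : V.Vge 0 q)
    (h : V.Vge 1 (p * p - a * (q * q))) : V.Vge 1 p ∧ V.Vge 1 q := by
  have ha : V.Vge 0 a := Or.inr (le_of_eq hνa.symm)
  by_cases hq1 : V.Vge 1 q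
  · have haq : V.Vge 2 (a * (q * q)) := by
      have := vge_mul ha (vge_mul hq1 hq1)
      exact vge_mono (by omega) this
    have hp2 : V.Vge 1 (p * p) := by
      have heq : p * p = (p * p - a * (q * q)) + a * (q * q) := by ring
      rw [heq]
      exact vge_add h (vge_mono (by omega) haq)
    refine ⟨?_, hq1⟩
    by_cases hp0 : p = 0
    · exact Or.inl hp0
    rcases hp2 with h' | h'
    · exact absurd (mul_self_eq_zero.mp h') hp0
    · rw [V.ν_mul p p hp0 hp0] at h'
      exact Or.inr (by omega)
  · have hq0 : q ≠ 0 ∧ V.ν q = 0 := unit_of_not_vge hq hq1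
    by_cases hp1 : V.Vge 1 p
    · exfalso
      have hval : V.Vge 1 (a * (q * q)) := by
        have heq : a * (q * q) = p * p - (p * p - a * (q * q)) := by ring
        rw [heq]
        exact vge_sub (vge_mono (by omega) (vge_mul hp1 hp1)) h
      have hne : a * (q * q) ≠ 0 := mul_ne_zero ha0 (mul_ne_zero hq0.1 hq0.1)
      have : V.ν (a * (q * q)) = 0 := by
        rw [V.ν_mul a _ ha0 (mul_ne_zero hq0.1 hq0.1),
          V.ν_mul q q hq0.1 hq0.1, hνa, hq0.2]
        ring
      rcases hval with h' | h'
      · exact hne h'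
      · omega
    · exfalso
      have hp0 : p ≠ 0 ∧ V.ν p = 0 := unit_of_not_vge hp hp1
      have hs0 : p / q ≠ 0 := div_ne_zero hp0.1 hq0.1
      have hνs : V.ν (p / q) = 0 := by
        rw [ν_div hp0.1 hq0.1, hp0.2, hq0.2]; ring
      have hqq : q * q ≠ 0 := mul_ne_zero hq0.1 hq0.1
      have hνqq : V.ν (q * q) = 0 := by
        rw [V.ν_mul q q hq0.1 hq0.1, hq0.2]; ring
      have hws : V.Vge 1 (a - (p / q) * (p / q)) := by
        have heq : a - (p / q) * (p / q) = -((p * p - a * (q * q)) / (q * q)) := by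
          field_simp [hq0.1]
          ring
        rw [heq]
        exact vge_neg (vge_div_unit h hqq hνqq)
      obtain ⟨r, hr⟩ := hensel_sqrt hcomp hchar hs0 hνs hws
      exact qa_not_sq haniso ⟨r, hr⟩

/-- Case `ν b = 1`: a primitive integral vector cannot make the norm form
very small. -/
lemma case1 (hcomp : V.IsComplete) (hchar : V.ResCharNeTwo)
    {a b : K} (ha0 : a ≠ 0) (hνa : V.ν a = 0) (hb0 : b ≠ 0) (hνb : V.ν b = 1)
    (haniso : QAniso a b) {d e f g : K}
    (hd : V.Vge 0 d) (he : V.Vge 0 e) (hf : V.Vge 0 f) (hg : V.Vge 0 g)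
    (hQ : V.Vge 2 (d * d - a * (e * e) - b * (f * f) + a * b * (g * g))) :
    V.Vge 1 d ∧ V.Vge 1 e ∧ V.Vge 1 f ∧ V.Vge 1 g := by
  have ha : V.Vge 0 a := Or.inr (le_of_eq hνa.symm)
  set T1 := d * d - a * (e * e) with hT1def
  set T2 := f * f - a * (g * g) with hT2def
  have hQeq : d * d - a * (e * e) - b * (f * f) + a * b * (g * g)
      = T1 - b * T2 := by rw [hT1def, hT2def]; ring
  rw [hQeq] at hQ
  have hT2vge0 : V.Vge 0 T2 := by
    have h1 : V.Vge 0 (f * f) := by simpa using vge_mul hf hf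
    have h2 : V.Vge 0 (a * (g * g)) := by
      simpa using vge_mul ha (vge_mul hg hg)
    exact vge_sub h1 h2
  by_cases hT1 : V.Vge 1 T1
  · have hde := key_unit hcomp hchar ha0 hνa haniso hd he hT1
    by_cases hT2 : V.Vge 1 T2
    · have hfg := key_unit hcomp hchar ha0 hνa haniso hf hg hT2
      exact ⟨hde.1, hde.2, hfg.1, hfg.2⟩
    · exfalso
      have hT2u : T2 ≠ 0 ∧ V.ν T2 = 0 := unit_of_not_vge hT2vge0 hT2
      have hbT2 : b * T2 ≠ 0 := mul_ne_zero hb0 hT2u.1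
      have hνbT2 : V.ν (-(b * T2)) = 1 := by
        rw [ν_neg hbT2, V.ν_mul b T2 hb0 hT2u.1, hνb, hT2u.2]; ring
      have hT1vge2 : V.Vge 2 T1 := by
        have h1 : V.Vge 2 (d * d) := vge_mul hde.1 hde.1
        have h2 : V.Vge 2 (a * (e * e)) := by
          have := vge_mul ha (vge_mul hde.2 hde.2)
          exact vge_mono (by omega) this
        exact vge_sub h1 h2
      have hst := ν_add_eq (V := V) (neg_ne_zero.mpr hbT2)
        (by rw [hνbT2]; exact hT1vge2)
      have heq2 : -(b * T2) + T1 = T1 - b * T2 := by ring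
      rw [heq2] at hst
      rcases hQ with h' | h'
      · exact hst.1 h'
      · rw [hst.2, hνbT2] at h'; omega
  · exfalso
    have hT1vge0 : V.Vge 0 T1 := by
      have h1 : V.Vge 0 (d * d) := by simpa using vge_mul hd hd
      have h2 : V.Vge 0 (a * (e * e)) := by
        simpa using vge_mul ha (vge_mul he he)
      exact vge_sub h1 h2
    have hT1u : T1 ≠ 0 ∧ V.ν T1 = 0 := unit_of_not_vge hT1vge0 hT1
    have hbT2 : V.Vge 1 (b * T2) := by
      have hb1 : V.Vge 1 b := Or.inr (le_of_eq hνb.symm)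
      simpa using vge_mul hb1 hT2vge0
    have hst := ν_add_eq (V := V) hT1u.1
      (by rw [hT1u.2]; exact vge_neg hbT2)
    have heq2 : T1 + -(b * T2) = T1 - b * T2 := by ring
    rw [heq2] at hst
    rcases hQ with h' | h'
    · exact hst.1 h'
    · rw [hst.2, hT1u.2] at h'; omega

end Cases

/-- every element of `O_D` has all four coordinates in `O_K`. -/
theorem stmt_2 (K : Type) [Field K] (V : DVal K)
    (hcomp : V.IsComplete) (hchar : V.ResCharNeTwo)
    -- D = ℍ[K,a,b] a division ring with ν(a) = 0 and ν(b) ∈ {0, 1}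
    (a b : K) (ha0 : a ≠ 0) (hb0 : b ≠ 0)
    (hva : V.ν a = 0) (hvb : V.ν b = 0 ∨ V.ν b = 1)
    (haniso : QAniso a b)
    -- u = δ + αx + βy + γz is a nonzero element with ν_K(Nrd u) ≥ 0, i.e. u ∈ O_D
    (δ α β γ : K)
    (hu0 : (⟨δ, α, β, γ⟩ : QuaternionAlgebra K a 0 b) ≠ 0)
    (hval : 0 ≤ V.ν (qnrd a b (⟨δ, α, β, γ⟩ : QuaternionAlgebra K a 0 b))) :
    V.Int δ ∧ V.Int α ∧ V.Int β ∧ V.Int γ := by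
  classical
  open DVal in
  have hval' : 0 ≤ V.ν (δ ^ 2 - a * α ^ 2 - b * β ^ 2 + a * b * γ ^ 2) := by
    simpa [qnrd] using hval
  have hQ0 : δ ^ 2 - a * α ^ 2 - b * β ^ 2 + a * b * γ ^ 2 ≠ 0 := by
    intro h
    obtain ⟨h1, h2, h3, h4⟩ := haniso δ α β γ h
    exact hu0 (by rw [h1, h2, h3, h4]; rfl)
  set A : ℤ := if δ = 0 then 0 else V.ν δ with hA
  set B : ℤ := if α = 0 then 0 else V.ν α with hB
  set C : ℤ := if β = 0 then 0 else V.ν β with hC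
  set D : ℤ := if γ = 0 then 0 else V.ν γ with hD
  set m : ℤ := min (min A B) (min C D) with hm
  by_cases hm0 : 0 ≤ m
  · refine ⟨?_, ?_, ?_, ?_⟩
    · by_cases h : δ = 0
      · exact Or.inl h
      · refine Or.inr ?_
        have hh : A = V.ν δ := by rw [hA, if_neg h]
        omega
    · by_cases h : α = 0
      · exact Or.inl h
      · refine Or.inr ?_
        have hh : B = V.ν α := by rw [hB, if_neg h]
        omega
    · by_cases h : β = 0
      · exact Or.inl h
      · refine Or.inr ?_
        have hh : C = V.ν β := by rw [hC, if_neg h]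
        omega
    · by_cases h : γ = 0
      · exact Or.inl h
      · refine Or.inr ?_
        have hh : D = V.ν γ := by rw [hD, if_neg h]
        omega
  · push_neg at hm0
    obtain ⟨p, hp0, hpν⟩ := V.ν_surj (-m)
    have coordInt : ∀ c : K, m ≤ (if c = 0 then 0 else V.ν c) → V.Vge 0 (p * c) := by
      intro c hc
      by_cases h : c = 0
      · exact Or.inl (by rw [h, mul_zero])
      · refine Or.inr ?_
        rw [if_neg h] at hc
        rw [V.ν_mul p c hp0 h, hpν]
        omega
    have hd := coordInt δ (by omega)
    have he := coordInt α (by omega)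
    have hf := coordInt β (by omega)
    have hg := coordInt γ (by omega)
    have aux : ∀ c : K, m = (if c = 0 then 0 else V.ν c) → V.Vge 1 (p * c) → False := by
      intro c hc H
      by_cases h0 : c = 0
      · rw [if_pos h0] at hc; omega
      · rw [if_neg h0] at hc
        rcases H with H | H
        · exact mul_ne_zero hp0 h0 H
        · rw [V.ν_mul p c hp0 h0, hpν, ← hc] at H; omega
    have hprim : ¬(V.Vge 1 (p * δ) ∧ V.Vge 1 (p * α) ∧ V.Vge 1 (p * β) ∧
        V.Vge 1 (p * γ)) := by
      rintro ⟨H1, H2, H3, H4⟩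
      have hcases : m = A ∨ m = B ∨ m = C ∨ m = D := by omega
      rcases hcases with h | h | h | h
      · exact aux δ (h.trans hA) H1
      · exact aux α (h.trans hB) H2
      · exact aux β (h.trans hC) H3
      · exact aux γ (h.trans hD) H4
    have hQ'eq : (p * δ) * (p * δ) - a * ((p * α) * (p * α)) -
        b * ((p * β) * (p * β)) + a * b * ((p * γ) * (p * γ))
        = (p * p) * (δ ^ 2 - a * α ^ 2 - b * β ^ 2 + a * b * γ ^ 2) := by ring
    have hνQ' : V.Vge 2 ((p * δ) * (p * δ) - a * ((p * α) * (p * α)) -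
        b * ((p * β) * (p * β)) + a * b * ((p * γ) * (p * γ))) := by
      rw [hQ'eq]
      refine Or.inr ?_
      rw [V.ν_mul (p * p) _ (mul_ne_zero hp0 hp0) hQ0, V.ν_mul p p hp0 hp0, hpν]
      omega
    rcases hvb with hb | hb
    · have all4 := case0 hcomp hchar ha0 hva hb0 hb haniso hd he hf hg
        (vge_mono (by omega) hνQ')
      exact (hprim all4).elim
    · have all4 := case1 hcomp hchar ha0 hva hb0 hb haniso hd he hf hg hνQ'
      exact (hprim all4).elim
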